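/- Every 3×3 pairwise comparison matrix A with entries a_{12} = a, a_{13} = b, a_{23} = c has Perron eigenvector proportional to the row geometric mean vector ((ab)^{1/3}, (c/a)^{1/3}, (1/(bc))^{1/3}); i.e., for n = 3 the eigenvector method and the row geometric mean method coincide. -/

import Mathlib

theorem em_eq_rgm_three (a b c : ℝ) (ha : 0 < a) (hb : 0 < b) (hc : 0 < c) :
    ∃ mu : ℝ, 0 < mu ∧
      (!![1, a, b; 1/a, 1, c; 1/b, 1/c, 1] : Matrix (Fin 3) (Fin 3) ℝ).mulVec
          ![(a * b) ^ ((1 : ℝ)/3), (c / a) ^ ((1 : ℝ)/3), (1 / (b * c)) ^ ((1 : ℝ)/3)] =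
        mu • ![(a * b) ^ ((1 : ℝ)/3), (c / a) ^ ((1 : ℝ)/3), (1 / (b * c)) ^ ((1 : ℝ)/3)] := by
  set p := a ^ ((1:ℝ)/3) with hp
  set q := b ^ ((1:ℝ)/3) with hq
  set r := c ^ ((1:ℝ)/3) with hr
  have hp0 : 0 < p := Real.rpow_pos_of_pos ha _
  have hq0 : 0 < q := Real.rpow_pos_of_pos hb _
  have hr0 : 0 < r := Real.rpow_pos_of_pos hc _
  have hp3 : p ^ 3 = a := by
    rw [hp, ← Real.rpow_natCast (a ^ ((1:ℝ)/3)) 3, ← Real.rpow_mul ha.le]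
    norm_num
  have hq3 : q ^ 3 = b := by
    rw [hq, ← Real.rpow_natCast (b ^ ((1:ℝ)/3)) 3, ← Real.rpow_mul hb.le]
    norm_num
  have hr3 : r ^ 3 = c := by
    rw [hr, ← Real.rpow_natCast (c ^ ((1:ℝ)/3)) 3, ← Real.rpow_mul hc.le]
    norm_num
  have hab : (a * b) ^ ((1:ℝ)/3) = p * q := Real.mul_rpow ha.le hb.le
  have hca : (c / a) ^ ((1:ℝ)/3) = r / p := Real.div_rpow hc.le ha.le _
  have hbc : (1 / (b * c)) ^ ((1:ℝ)/3) = 1 / (q * r) := by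
    rw [Real.div_rpow (by norm_num) (by positivity), Real.one_rpow,
      Real.mul_rpow hb.le hc.le]
  refine ⟨1 + p * r / q + q / (p * r), by positivity, ?_⟩
  funext i
  fin_cases i <;>
  · simp only [Matrix.mulVec, dotProduct, Fin.sum_univ_three, Matrix.cons_val',
      Matrix.cons_val_zero, Matrix.cons_val_one, Matrix.head_cons, Matrix.head_fin_const,
      Matrix.empty_val', Matrix.cons_val_fin_one, Matrix.cons_val_two, Matrix.tail_cons,
      Pi.smul_apply, smul_eq_mul, hab, hca, hbc, Fin.zero_eta, Fin.mk_one, Fin.isValue,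
      Matrix.of_apply, Matrix.cons_val, Fin.reduceFinMk]
    simp only [← hp3, ← hq3, ← hr3]
    field_simp
    all_goals ring
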